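/- Let p be a prime, let (X,R) be a finite p-regular presentation (every element of R non-trivial), let G = F(X)/⟨⟨R⟩⟩ with projection π : F(X) → G, and let f ∈ F(X) be an element whose image in the pro-p completion of G has infinite order, i.e., for every k ≥ 1 there exists a normal subgroup N of G of p-power index with π(f)^k ∉ N. Then there exists N ∈ ℕ such that for all n ≥ N the presentation (X, R ∪ {f^{p^n}}) is p-regular. -/

import Mathlib

set_option linter.unusedSectionVars false
namespace FGAux

open FreeGroup List

variable {α : Type*} [DecidableEq α]

/-- A word is reduced iff no adjacent pair cancels. -/
def IsRed (L : List (α × Bool)) : Prop :=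
  L.Chain' (fun a b => ¬ b = (a.1, !a.2))

theorem isRed_reduce (L : List (α × Bool)) : IsRed (FreeGroup.reduce L) := by
  induction L with
  | nil => exact List.isChain_nil
  | cons x T ih =>
    rw [FreeGroup.reduce.cons]
    cases h : FreeGroup.reduce T with
    | nil => exact List.isChain_singleton _
    | cons hd tl =>
      rw [h] at ih
      show IsRed (if x.1 = hd.1 ∧ x.2 = !hd.2 then tl else x :: hd :: tl)
      by_cases hc : x.1 = hd.1 ∧ x.2 = !hd.2
      · rw [if_pos hc]; exact ih.tail
      · rw [if_neg hc]
        refine List.isChain_cons_cons.2 ⟨?_, ih⟩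
        intro he
        exact hc ⟨by rw [he], by rw [he, Bool.not_not]⟩

theorem reduce_eq_self_of_isRed {L : List (α × Bool)} (h : IsRed L) :
    FreeGroup.reduce L = L := by
  induction L with
  | nil => rfl
  | cons x T ih =>
    rw [FreeGroup.reduce.cons, ih (h.tail)]
    cases T with
    | nil => rfl
    | cons hd tl =>
      have hx : ¬ hd = (x.1, !x.2) := (List.isChain_cons_cons.1 h).1
      have hns : ¬ (x.1 = hd.1 ∧ x.2 = !hd.2) := by
        rintro ⟨h1, h2⟩
        exact hx (Prod.ext h1.symm (by rw [h2, Bool.not_not]))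
      show (if x.1 = hd.1 ∧ x.2 = !hd.2 then tl else x :: hd :: tl) = x :: hd :: tl
      rw [if_neg hns]

theorem isRed_toWord (x : FreeGroup α) : IsRed x.toWord := by
  have := isRed_reduce (α := α) x.toWord
  rwa [FreeGroup.reduce_toWord] at this

theorem IsRed.infix {L l : List (α × Bool)} (h : IsRed L) (h' : l <:+: L) : IsRed l :=
  List.IsChain.infix h h'

theorem invRev_getLast? (m : List (α × Bool)) :
    (FreeGroup.invRev m).getLast? = m.head?.map (fun a => (a.1, !a.2)) := by
  rw [FreeGroup.invRev, List.getLast?_reverse, List.head?_map]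

theorem invRev_append (u v : List (α × Bool)) :
    FreeGroup.invRev (u ++ v) = FreeGroup.invRev v ++ FreeGroup.invRev u := by
  simp [FreeGroup.invRev]

theorem invRev_singleton (a : α × Bool) :
    FreeGroup.invRev [a] = [(a.1, !a.2)] := rfl

/-- Cyclically reduced nonempty word. -/
def CycRed (c : List (α × Bool)) : Prop :=
  c ≠ [] ∧ IsRed c ∧ ∀ x ∈ c.head?, ∀ y ∈ c.getLast?, ¬ x = (y.1, !y.2)

/-- `n`-fold concatenation. -/
def W (n : ℕ) (c : List (α × Bool)) : List (α × Bool) :=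
  (List.replicate n c).flatten

theorem W_succ (n : ℕ) (c : List (α × Bool)) : W (n + 1) c = c ++ W n c := by
  simp [W, List.replicate_succ]

theorem W_length (n : ℕ) (c : List (α × Bool)) : (W n c).length = n * c.length := by
  simp [W, mul_comm]

theorem W_ne_nil {n : ℕ} {c : List (α × Bool)} (hn : 1 ≤ n) (hc : c ≠ []) :
    W n c ≠ [] := by
  intro h
  have := congrArg List.length h
  rw [W_length] at this
  simp only [List.length_nil] at this
  rcases Nat.mul_eq_zero.1 this with h' | h'
  · omega
  · exact hc (List.length_eq_zero_iff.1 h')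

theorem W_head? {n : ℕ} {c : List (α × Bool)} (hn : 1 ≤ n) (hc : c ≠ []) :
    (W n c).head? = c.head? := by
  obtain ⟨m, rfl⟩ : ∃ m, n = m + 1 := ⟨n - 1, by omega⟩
  rw [W_succ, List.head?_append_of_ne_nil _ hc]

theorem W_getLast? {n : ℕ} {c : List (α × Bool)} (hn : 1 ≤ n) (hc : c ≠ []) :
    (W n c).getLast? = c.getLast? := by
  induction n with
  | zero => omega
  | succ m ih =>
    rcases Nat.eq_zero_or_pos m with hm | hm
    · subst hm; simp [W]
    · rw [W_succ, List.getLast?_append_of_ne_nil _ (W_ne_nil hm hc), ih hm]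

theorem isRed_W {c : List (α × Bool)} (hc : CycRed c) (n : ℕ) : IsRed (W n c) := by
  induction n with
  | zero => exact List.isChain_nil
  | succ m ih =>
    rw [W_succ]
    refine List.isChain_append.2 ⟨hc.2.1, ih, ?_⟩
    intro x hx y hy
    rcases Nat.eq_zero_or_pos m with hm | hm
    · subst hm; simp [W] at hy
    · rw [W_head? hm hc.1] at hy
      exact hc.2.2 y hy x hx

theorem isRed_u_W {u c : List (α × Bool)} (h : IsRed (u ++ c ++ FreeGroup.invRev u))
    (hc : CycRed c) {n : ℕ} (hn : 1 ≤ n) :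
    IsRed (u ++ W n c ++ FreeGroup.invRev u) := by
  have h' : IsRed (u ++ (c ++ FreeGroup.invRev u)) := by rwa [← List.append_assoc]
  obtain ⟨hu, hrest, hjun⟩ := List.isChain_append.1 h'
  obtain ⟨hcred, hinv, hjun2⟩ := List.isChain_append.1 hrest
  rw [List.append_assoc]
  refine List.isChain_append.2 ⟨hu, ?_, ?_⟩
  · refine List.isChain_append.2 ⟨isRed_W hc n, hinv, ?_⟩
    intro x hx y hy
    rw [W_getLast? hn hc.1] at hx
    exact hjun2 x hx y hy
  · intro x hx y hy
    rw [List.head?_append_of_ne_nil _ (W_ne_nil hn hc.1), W_head? hn hc.1] at hy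
    refine hjun x hx y ?_
    rw [List.head?_append_of_ne_nil _ hc.1]
    exact hy

theorem toWord_pow {u c : List (α × Bool)} (h : IsRed (u ++ c ++ FreeGroup.invRev u))
    (hc : CycRed c) {n : ℕ} (hn : 1 ≤ n) :
    ((FreeGroup.mk (u ++ c ++ FreeGroup.invRev u)) ^ n).toWord
      = u ++ W n c ++ FreeGroup.invRev u := by
  have hx : FreeGroup.mk (u ++ c ++ FreeGroup.invRev u)
      = FreeGroup.mk u * FreeGroup.mk c * (FreeGroup.mk u)⁻¹ := by
    rw [FreeGroup.inv_mk, FreeGroup.mul_mk, FreeGroup.mul_mk]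
  have hpow : (FreeGroup.mk (u ++ c ++ FreeGroup.invRev u)) ^ n
      = FreeGroup.mk (u ++ W n c ++ FreeGroup.invRev u) := by
    rw [hx]
    rw [conj_pow]
    rw [FreeGroup.pow_mk, FreeGroup.inv_mk, FreeGroup.mul_mk, FreeGroup.mul_mk]
    rfl
  rw [hpow, FreeGroup.toWord_mk, reduce_eq_self_of_isRed (isRed_u_W h hc hn)]

theorem exists_decomp : ∀ (k : ℕ) (L : List (α × Bool)), L.length ≤ k → IsRed L →
    (∃ u, L = u ++ FreeGroup.invRev u) ∨
      (∃ u c, L = u ++ c ++ FreeGroup.invRev u ∧ CycRed c) := by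
  intro k
  induction k with
  | zero =>
    intro L hL _
    left
    refine ⟨[], ?_⟩
    simp [List.length_eq_zero_iff.1 (Nat.le_zero.1 hL)]
  | succ k ih =>
    intro L hL hred
    cases hLnil : L with
    | nil => exact Or.inl ⟨[], by simp⟩
    | cons a T =>
      subst hLnil
      by_cases hcyc : ∀ x ∈ (a :: T).head?, ∀ y ∈ (a :: T).getLast?, ¬ x = (y.1, !y.2)
      · exact Or.inr ⟨[], a :: T, by simp, List.cons_ne_nil a T, hred, hcyc⟩
      · push_neg at hcyc
        obtain ⟨x, hx, y, hy, hxy⟩ := hcyc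
        have hxa : a = x := by simpa using hx
        subst hxa
        have hT : T ≠ [] := by
          rintro rfl
          simp only [List.getLast?_singleton, Option.mem_some_iff] at hy
          subst hy
          have := congrArg Prod.snd hxy
          simp at this
        have hyz : y = T.getLast hT := by
          have h5 : (a :: T).getLast? = some (T.getLast hT) := by
            rw [List.getLast?_eq_getLast (List.cons_ne_nil _ _),
              List.getLast_cons hT]
          rw [h5, Option.mem_some_iff] at hy
          exact hy.symm
        subst hyz
        -- L = [a] ++ mid ++ [last], last = (a.1, !a.2)
        set z := T.getLast hT with hz
        have hTd : T = T.dropLast ++ [z] := (List.dropLast_append_getLast hT).symm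
        have h1 : a.1 = z.1 := by rw [hxy]
        have h2 : a.2 = !z.2 := by rw [hxy]
        have hzval : z = (a.1, !a.2) := by
          rw [h1, h2, Bool.not_not]
        have hLd : a :: T = [a] ++ T.dropLast ++ FreeGroup.invRev [a] := by
          rw [invRev_singleton, ← hzval]
          simpa using hTd
        have hmidlen : T.dropLast.length ≤ k := by
          have h1 : T.length + 1 ≤ k + 1 := by simpa using hL
          have := List.length_dropLast (xs := T)
          omega
        have hmidred : IsRed T.dropLast :=
          hred.infix ⟨[a], [z], by
            rw [List.append_assoc]; exact congrArg (List.cons a) hTd.symm⟩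
        rcases ih T.dropLast hmidlen hmidred with ⟨w, hw⟩ | ⟨w, c, hw, hcred⟩
        · left
          refine ⟨[a] ++ w, ?_⟩
          rw [hLd, hw, invRev_append]
          simp
        · right
          refine ⟨[a] ++ w, c, ?_, hcred⟩
          rw [hLd, hw, invRev_append]
          simp

theorem exists_cyc (x : FreeGroup α) (hx : x ≠ 1) :
    ∃ u c, x.toWord = u ++ c ++ FreeGroup.invRev u ∧ CycRed c := by
  rcases exists_decomp x.toWord.length x.toWord le_rfl (isRed_toWord x) with ⟨u, hu⟩ | h
  · exfalso
    apply hx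
    have h1 : FreeGroup.mk x.toWord = x := FreeGroup.mk_toWord
    rw [hu, ← FreeGroup.mul_mk, ← FreeGroup.inv_mk, mul_inv_cancel] at h1
    exact h1.symm
  · exact h

theorem key_eq {n : ℕ} (hn : 1 ≤ n) {u c v d : List (α × Bool)}
    (hc : CycRed c) (hd : CycRed d) (hlen : u.length ≤ v.length)
    (heq : u ++ W n c ++ FreeGroup.invRev u = v ++ W n d ++ FreeGroup.invRev v) :
    u ++ c ++ FreeGroup.invRev u = v ++ d ++ FreeGroup.invRev v := by
  have hupre : u <+: (u ++ W n c ++ FreeGroup.invRev u) := by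
    rw [List.append_assoc]; exact List.prefix_append u _
  have hvpre : v <+: (u ++ W n c ++ FreeGroup.invRev u) := by
    rw [heq, List.append_assoc]; exact List.prefix_append v _
  obtain ⟨m, rfl⟩ := List.prefix_of_prefix_length_le hupre hvpre hlen
  rw [invRev_append] at heq
  have heq2 : W n c ++ FreeGroup.invRev u
      = (m ++ (W n d ++ FreeGroup.invRev m)) ++ FreeGroup.invRev u := by
    apply List.append_cancel_left (as := u)
    simpa [List.append_assoc] using heq
  have heq3 : W n c = m ++ (W n d ++ FreeGroup.invRev m) :=
    List.append_cancel_right heq2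
  by_cases hm : m = []
  · subst hm
    simp only [List.nil_append, List.append_nil, FreeGroup.invRev_empty] at heq3 ⊢
    have hlencd : c.length = d.length := by
      have := congrArg List.length heq3
      rw [W_length, W_length] at this
      exact Nat.eq_of_mul_eq_mul_left (by omega) this
    have hcd : c = d := by
      obtain ⟨m', rfl⟩ : ∃ m', n = m' + 1 := ⟨n - 1, by omega⟩
      have h1 : (W (m' + 1) c).take c.length = c := by
        rw [W_succ]; exact List.take_left
      have h2 : (W (m' + 1) d).take d.length = d := by
        rw [W_succ]; exact List.take_left
      rw [← h1, heq3, hlencd, h2]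
    rw [hcd]
  · exfalso
    have hWne : W n c ≠ [] := W_ne_nil hn hc.1
    have hinvm : FreeGroup.invRev m ≠ [] := by
      intro h
      have := congrArg List.length h
      rw [FreeGroup.invRev_length] at this
      exact hm (List.length_eq_zero_iff.1 this)
    obtain ⟨h0, hm0⟩ : ∃ h0, m.head? = some h0 := by
      cases m with
      | nil => exact absurd rfl hm
      | cons a t => exact ⟨a, rfl⟩
    have hhead : c.head? = some h0 := by
      rw [← W_head? hn hc.1, heq3, List.head?_append_of_ne_nil _ hm, hm0]
    have hlast : c.getLast? = some (h0.1, !h0.2) := by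
      rw [← W_getLast? hn hc.1, heq3, ← List.append_assoc,
        List.getLast?_append_of_ne_nil _ hinvm, invRev_getLast?, hm0]
      rfl
    have := hc.2.2 h0 (by rw [hhead]; rfl) (h0.1, !h0.2) (by rw [hlast]; rfl)
    apply this
    exact Prod.ext rfl (by simp)

theorem pow_injective {n : ℕ} (hn : 1 ≤ n) {x y : FreeGroup α}
    (h : x ^ n = y ^ n) : x = y := by
  have main : ∀ x y : FreeGroup α, x ≠ 1 → y ≠ 1 → x ^ n = y ^ n → x = y := by
    intro x y hx hy hxy
    obtain ⟨u, c, hxw, hc⟩ := exists_cyc x hx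
    obtain ⟨v, d, hyw, hd⟩ := exists_cyc y hy
    have hxmk : FreeGroup.mk (u ++ c ++ FreeGroup.invRev u) = x := by
      rw [← hxw]; exact FreeGroup.mk_toWord
    have hymk : FreeGroup.mk (v ++ d ++ FreeGroup.invRev v) = y := by
      rw [← hyw]; exact FreeGroup.mk_toWord
    have hredx : IsRed (u ++ c ++ FreeGroup.invRev u) := by
      rw [← hxw]; exact isRed_toWord x
    have hredy : IsRed (v ++ d ++ FreeGroup.invRev v) := by
      rw [← hyw]; exact isRed_toWord y
    have hwords : u ++ W n c ++ FreeGroup.invRev u = v ++ W n d ++ FreeGroup.invRev v := by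
      rw [← toWord_pow hredx hc hn, ← toWord_pow hredy hd hn, hxmk, hymk, hxy]
    have : u ++ c ++ FreeGroup.invRev u = v ++ d ++ FreeGroup.invRev v := by
      rcases le_total u.length v.length with hle | hle
      · exact key_eq hn hc hd hle hwords
      · exact (key_eq hn hd hc hle hwords.symm).symm
    rw [← hxmk, ← hymk, this]
  have hppos : ∀ z : FreeGroup α, z ≠ 1 → z ^ n ≠ 1 := by
    intro z hz hzn
    obtain ⟨u, c, hzw, hc⟩ := exists_cyc z hz
    have hzmk : FreeGroup.mk (u ++ c ++ FreeGroup.invRev u) = z := by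
      rw [← hzw]; exact FreeGroup.mk_toWord
    have hredz : IsRed (u ++ c ++ FreeGroup.invRev u) := by
      rw [← hzw]; exact isRed_toWord z
    have := toWord_pow hredz hc hn
    rw [hzmk, hzn, FreeGroup.toWord_one] at this
    have h1 := congrArg List.length this
    simp only [List.length_nil, List.length_append, W_length] at h1
    have hc1 : 1 ≤ c.length := by
      cases c with
      | nil => exact absurd rfl hc.1
      | cons a t => simp
    have : 1 ≤ n * c.length := Nat.one_le_iff_ne_zero.2 (by positivity)
    omega
  by_cases hx : x = 1
  · subst hx
    by_contra hy
    exact hppos y (Ne.symm hy) (by rw [← h, one_pow])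
  · by_cases hy : y = 1
    · subst hy
      exact absurd (by rw [h, one_pow]) (hppos x hx)
    · exact main x y hx hy h


/-- In a finite `p`-group, every `y ≠ 1` is avoided by some normal subgroup that
contains `y ^ p`. -/
theorem pgroup_lemma {p : ℕ} (hp : p.Prime) {Q : Type*} [Group Q] [Finite Q]
    (hQ : IsPGroup p Q) {y : Q} (hy : y ≠ 1) :
    ∃ M : Subgroup Q, M.Normal ∧ y ∉ M ∧ y ^ p ∈ M := by
  classical
  haveI : Fact p.Prime := ⟨hp⟩
  set S : Set (Subgroup Q) := {M | M.Normal ∧ y ∉ M} with hS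
  have hFin : S.Finite := Set.toFinite S
  have hne : S.Nonempty := ⟨⊥, inferInstance, by simpa using hy⟩
  obtain ⟨M, hMS, hmax⟩ := Set.Finite.exists_maximalFor id S hFin hne
  refine ⟨M, hMS.1, hMS.2, ?_⟩
  by_contra hyp
  haveI : M.Normal := hMS.1
  let π : Q →* Q ⧸ M := QuotientGroup.mk' M
  have hy1 : π y ≠ 1 := by
    rw [Ne, QuotientGroup.mk'_apply, QuotientGroup.eq_one_iff]
    exact hMS.2
  have hyp1 : (π y) ^ p ≠ 1 := by
    rw [← map_pow, Ne, QuotientGroup.mk'_apply, QuotientGroup.eq_one_iff]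
    exact hyp
  haveI : Nontrivial (Q ⧸ M) := nontrivial_of_ne (π y) 1 hy1
  haveI : Finite (Q ⧸ M) := Quotient.finite _
  have hQ' : IsPGroup p (Q ⧸ M) := hQ.to_quotient M
  have hkey : ∀ K : Subgroup (Q ⧸ M), K.Normal → K ≠ ⊥ → π y ∈ K := by
    intro K hKn hKbot
    by_contra hyK
    have hmem : K.comap π ∈ S := ⟨hKn.comap π, fun h => hyK h⟩
    have hMle : M ≤ K.comap π := by
      intro g hg
      have : π g = 1 := by rw [QuotientGroup.mk'_apply, QuotientGroup.eq_one_iff]; exact hg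
      show π g ∈ K
      rw [this]; exact K.one_mem
    have heqM : M = K.comap π := le_antisymm hMle (hmax hmem hMle)
    apply hKbot
    rw [eq_bot_iff]
    intro k hk
    obtain ⟨g, rfl⟩ := QuotientGroup.mk'_surjective M k
    have hgM : g ∈ M := by rw [heqM]; exact hk
    have : (QuotientGroup.mk' M) g = 1 := by
      rw [QuotientGroup.mk'_apply, QuotientGroup.eq_one_iff]; exact hgM
    rw [this]; exact Subgroup.mem_bot.2 rfl
  have hZ : Subgroup.center (Q ⧸ M) ≠ ⊥ := by
    haveI := hQ'.center_nontrivial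
    exact (Subgroup.nontrivial_iff_ne_bot _).1 this
  have hyZ : π y ∈ Subgroup.center (Q ⧸ M) := hkey _ inferInstance hZ
  have hypZ : (π y) ^ p ∈ Subgroup.center (Q ⧸ M) := Subgroup.pow_mem _ hyZ p
  have hznormal : (Subgroup.zpowers ((π y) ^ p)).Normal := by
    constructor
    intro z hz g
    have hzZ : z ∈ Subgroup.center (Q ⧸ M) :=
      (Subgroup.zpowers_le.2 hypZ) hz
    have hcomm := (Subgroup.mem_center_iff.1 hzZ) g
    rw [show g * z * g⁻¹ = z from by rw [hcomm]; group]
    exact hz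
  have hzn : Subgroup.zpowers ((π y) ^ p) ≠ ⊥ := by
    rw [Ne, Subgroup.zpowers_eq_bot]
    exact hyp1
  obtain ⟨k, hk⟩ := Subgroup.mem_zpowers_iff.1 (hkey _ hznormal hzn)
  have h1 : (π y) ^ (p * k - 1 : ℤ) = 1 := by
    have h2 : (π y) ^ (p * k : ℤ) = π y := by
      rw [zpow_mul, zpow_natCast]; exact hk
    rw [zpow_sub, h2, zpow_one, mul_inv_cancel]
  have hdvd : (orderOf (π y) : ℤ) ∣ (p * k - 1) := orderOf_dvd_iff_zpow_eq_one.2 h1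
  obtain ⟨t, ht⟩ := IsPGroup.iff_orderOf.1 hQ' (π y)
  have htpos : t ≠ 0 := by
    rintro rfl
    rw [pow_zero] at ht
    exact hy1 (orderOf_eq_one_iff.1 ht)
  have hpd : (p : ℤ) ∣ orderOf (π y) := by
    rw [ht]; exact_mod_cast dvd_pow_self p htpos
  have hp1 : (p : ℤ) ∣ 1 := by
    have h2 : (p : ℤ) ∣ p * k - 1 := dvd_trans hpd hdvd
    have h3 : (p : ℤ) ∣ p * k := Dvd.intro k rfl
    simpa using dvd_sub h3 h2
  have := Int.le_of_dvd one_pos hp1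
  have := hp.two_le
  omega


end FGAux

/-- A presentation of `G` (given by a projection `π : F(X) → G` and relator set `R`) is
`p`-regular if for every `r ∈ R` admitting a `p`-th root `s` in `F(X)`, the image `π s`
survives in some quotient of `G` of `p`-power order. -/
def IsPRegular (p : ℕ) {X G : Type*} [Group G] (π : FreeGroup X →* G)
    (R : Set (FreeGroup X)) : Prop :=
  ∀ r ∈ R, ∀ s : FreeGroup X, s ^ p = r →
    ∃ N : Subgroup G, N.Normal ∧ (∃ k : ℕ, N.index = p ^ k) ∧ π s ∉ N

/-- Let `(X,R)` be a finite `p`-regular presentation of `G = F(X)/⟨⟨R⟩⟩` and `f ∈ F(X)` an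
element whose image in the pro-`p` completion of `G` has infinite order (for every `k ≥ 1`
there is a normal subgroup of `p`-power index avoiding `π(f)^k`).  Then there exists `N ∈ ℕ`
such that for all `n ≥ N` the presentation `(X, R ∪ {f^{pⁿ}})` is `p`-regular. -/
theorem stmt12 (p : ℕ) (hp : p.Prime) (X : Type) [Finite X]
    (R : Finset (FreeGroup X)) (hR : ∀ r ∈ R, r ≠ 1)
    (hreg : IsPRegular p
      (QuotientGroup.mk' (Subgroup.normalClosure (R : Set (FreeGroup X))))
      (R : Set (FreeGroup X)))
    (f : FreeGroup X)
    (hf : ∀ k : ℕ, 1 ≤ k →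
      ∃ N : Subgroup (FreeGroup X ⧸ Subgroup.normalClosure (R : Set (FreeGroup X))),
        N.Normal ∧ (∃ j : ℕ, N.index = p ^ j) ∧
        (QuotientGroup.mk' (Subgroup.normalClosure (R : Set (FreeGroup X))) f) ^ k ∉ N) :
    ∃ N₀ : ℕ, ∀ n : ℕ, N₀ ≤ n →
      IsPRegular p
        (QuotientGroup.mk'
          (Subgroup.normalClosure ((R : Set (FreeGroup X)) ∪ {f ^ p ^ n})))
        ((R : Set (FreeGroup X)) ∪ {f ^ p ^ n}) := by
  classical
  let F := FreeGroup X
  let K₀ : Subgroup (FreeGroup X) := Subgroup.normalClosure (R : Set (FreeGroup X))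
  let π : FreeGroup X →* FreeGroup X ⧸ K₀ := QuotientGroup.mk' K₀
  -- pull back `hreg` to the free group
  have hreg' : ∀ r ∈ R, ∀ s : FreeGroup X, s ^ p = r → ∃ j : ℕ, ∃ M : Subgroup (FreeGroup X),
      M.Normal ∧ K₀ ≤ M ∧ M.index = p ^ j ∧ s ∉ M := by
    intro r hr s hs
    obtain ⟨N, hN, ⟨j, hj⟩, hsN⟩ := hreg r (Finset.mem_coe.2 hr) s hs
    refine ⟨j, N.comap π, hN.comap π, ?_, ?_, hsN⟩
    · intro g hg
      have : π g = 1 := by rw [QuotientGroup.mk'_apply, QuotientGroup.eq_one_iff]; exact hg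
      show π g ∈ N
      rw [this]; exact N.one_mem
    · rw [Subgroup.index_comap_of_surjective _ (QuotientGroup.mk'_surjective _), hj]
  -- pull back `hf` to the free group
  have hf' : ∀ k : ℕ, 1 ≤ k → ∃ j : ℕ, ∃ M : Subgroup (FreeGroup X),
      M.Normal ∧ K₀ ≤ M ∧ M.index = p ^ j ∧ f ^ k ∉ M := by
    intro k hk
    obtain ⟨N, hN, ⟨j, hj⟩, hfN⟩ := hf k hk
    refine ⟨j, N.comap π, hN.comap π, ?_, ?_, ?_⟩
    · intro g hg
      have : π g = 1 := by rw [QuotientGroup.mk'_apply, QuotientGroup.eq_one_iff]; exact hg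
      show π g ∈ N
      rw [this]; exact N.one_mem
    · rw [Subgroup.index_comap_of_surjective _ (QuotientGroup.mk'_surjective _), hj]
    · intro hmem
      apply hfN
      have : π (f ^ k) ∈ N := hmem
      rwa [map_pow] at this
  -- a uniform (in `s`) bound for each relator, using uniqueness of `p`-th roots
  have key : ∀ r : FreeGroup X, ∃ j : ℕ, r ∈ R → ∀ s : FreeGroup X, s ^ p = r →
      ∃ M : Subgroup (FreeGroup X), M.Normal ∧ K₀ ≤ M ∧ M.index = p ^ j ∧ s ∉ M := by
    intro r
    by_cases hr : r ∈ R ∧ ∃ s : F, s ^ p = r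
    · obtain ⟨hrR, s₀, hs₀⟩ := hr
      obtain ⟨j, M, hM⟩ := hreg' r hrR s₀ hs₀
      refine ⟨j, fun _ s hs => ?_⟩
      have hss : s = s₀ := FGAux.pow_injective hp.one_lt.le (hs.trans hs₀.symm)
      exact ⟨M, hM.1, hM.2.1, hM.2.2.1, hss ▸ hM.2.2.2⟩
    · exact ⟨0, fun hrR s hs => absurd ⟨hrR, s, hs⟩ hr⟩
  choose J hJ using key
  refine ⟨R.sup J + 1, ?_⟩
  intro n hn
  have hn1 : 1 ≤ n := le_trans (Nat.le_add_left 1 _) hn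
  let Kn : Subgroup (FreeGroup X) :=
    Subgroup.normalClosure ((R : Set (FreeGroup X)) ∪ {f ^ p ^ n})
  -- packaging: a good normal subgroup of `F` gives a good subgroup of the new quotient
  have pack : ∀ s : FreeGroup X, ∀ M : Subgroup (FreeGroup X), M.Normal → Kn ≤ M →
      (∃ k, M.index = p ^ k) → s ∉ M →
      ∃ N : Subgroup (FreeGroup X ⧸ Kn), N.Normal ∧ (∃ k : ℕ, N.index = p ^ k) ∧
        (QuotientGroup.mk' Kn) s ∉ N := by
    intro s M hMnorm hKnM hMidx hsM
    have hcm : (M.map (QuotientGroup.mk' Kn)).comap (QuotientGroup.mk' Kn) = M := by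
      rw [Subgroup.comap_map_eq, QuotientGroup.ker_mk', sup_eq_left.2 hKnM]
    refine ⟨M.map (QuotientGroup.mk' Kn),
      hMnorm.map _ (QuotientGroup.mk'_surjective _), ?_, ?_⟩
    · obtain ⟨k, hk⟩ := hMidx
      refine ⟨k, ?_⟩
      have := Subgroup.index_comap_of_surjective (M.map (QuotientGroup.mk' Kn))
        (QuotientGroup.mk'_surjective Kn)
      rw [hcm] at this
      rw [← this, hk]
    · intro hmem
      apply hsM
      have : s ∈ (M.map (QuotientGroup.mk' Kn)).comap (QuotientGroup.mk' Kn) := hmem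
      rwa [hcm] at this
  intro r hrmem s hs
  rcases hrmem with hrR | hrf
  · -- old relator
    have hrR' : r ∈ R := hrR
    obtain ⟨M, hMnorm, hK₀M, hMidx, hsM⟩ := hJ r hrR' s hs
    haveI : M.Normal := hMnorm
    have hjn : J r ≤ n := by
      have := Finset.le_sup (f := J) hrR'
      omega
    have hfM : f ^ p ^ n ∈ M := by
      have h1 : f ^ p ^ J r ∈ M := by
        rw [← hMidx]; exact M.pow_index_mem f
      have h2 : p ^ n = p ^ J r * p ^ (n - J r) := by
        rw [← pow_add]
        congr 1
        omega
      rw [h2, pow_mul]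
      exact Subgroup.pow_mem M h1 _
    refine pack s M hMnorm ?_ ⟨J r, hMidx⟩ hsM
    apply Subgroup.normalClosure_le_normal
    apply Set.union_subset
    · exact le_trans (le_trans Subgroup.subset_normalClosure hK₀M) le_rfl
    · intro x hx
      rw [Set.mem_singleton_iff] at hx
      subst hx
      exact hfM
  · -- new relator `f ^ p ^ n`
    rw [Set.mem_singleton_iff] at hrf
    subst hrf
    have hs' : s = f ^ p ^ (n - 1) := by
      apply FGAux.pow_injective hp.one_lt.le
      rw [hs, ← pow_mul, ← pow_succ]
      congr 2
      omega
    obtain ⟨j, M₀, hM₀norm, hK₀M₀, hM₀idx, hfM₀⟩ :=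
      hf' (p ^ n) (Nat.one_le_pow _ _ hp.pos)
    haveI : M₀.Normal := hM₀norm
    haveI : Finite (FreeGroup X ⧸ M₀) := by
      apply Nat.finite_of_card_ne_zero
      rw [← Subgroup.index_eq_card, hM₀idx]
      exact pow_ne_zero _ hp.pos.ne'
    have hQp : IsPGroup p (FreeGroup X ⧸ M₀) :=
      IsPGroup.of_card (by rw [← Subgroup.index_eq_card, hM₀idx])
    let ρ : FreeGroup X →* FreeGroup X ⧸ M₀ := QuotientGroup.mk' M₀
    have hyppow : (ρ (f ^ p ^ (n - 1))) ^ p = ρ (f ^ p ^ n) := by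
      rw [← map_pow, ← pow_mul, ← pow_succ]
      have hnn : n - 1 + 1 = n := by omega
      rw [hnn]
    have hyp_ne : (ρ (f ^ p ^ (n - 1))) ^ p ≠ 1 := by
      rw [hyppow, QuotientGroup.mk'_apply, Ne, QuotientGroup.eq_one_iff]
      exact hfM₀
    have hy_ne : ρ (f ^ p ^ (n - 1)) ≠ 1 := by
      intro h
      exact hyp_ne (by rw [h, one_pow])
    obtain ⟨Mb, hMbnorm, hyMb, hypMb⟩ := FGAux.pgroup_lemma hp hQp hy_ne
    refine pack s (Mb.comap ρ) (hMbnorm.comap ρ) ?_ ?_ ?_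
    · apply Subgroup.normalClosure_le_normal
      apply Set.union_subset
      · refine le_trans Subgroup.subset_normalClosure (le_trans hK₀M₀ ?_)
        intro g hg
        have : ρ g = 1 := by rw [QuotientGroup.mk'_apply, QuotientGroup.eq_one_iff]; exact hg
        show ρ g ∈ Mb
        rw [this]; exact Mb.one_mem
      · intro x hx
        rw [Set.mem_singleton_iff] at hx
        subst hx
        show ρ (f ^ p ^ n) ∈ Mb
        rw [← hyppow]
        exact hypMb
    · have h1 : (Mb.comap ρ).index = Mb.index :=
        Subgroup.index_comap_of_surjective _ (QuotientGroup.mk'_surjective _)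
      have h2 : Mb.index ∣ p ^ j := by
        have h3 : Mb.index ∣ Nat.card (FreeGroup X ⧸ M₀) := Subgroup.index_dvd_card Mb
        rwa [← Subgroup.index_eq_card, hM₀idx] at h3
      obtain ⟨k, _, hk⟩ := (Nat.dvd_prime_pow hp).1 h2
      exact ⟨k, by rw [h1, hk]⟩
    · rw [hs']
      exact hyMb
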